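/- The three open intervals (λ₁(F_i, 1⁸), λ₁(F_i, 0^∞)) for i ∈ {1,2,3} cover the interval (-λ', -λ*); that is, every real number in (-λ', -λ*) lies in at least one of these three intervals. -/

import Mathlib

/-- A rooted graph: a finite simple graph with a distinguished root vertex. -/
structure RootedGraph where
  V : Type
  [fintypeV : Fintype V]
  G : SimpleGraph V
  root : V

attribute [instance] RootedGraph.fintypeV

/-- One-step extension of a rooted graph: attach a new path vertex (the new root)
to the old root, together with a clique of `k` new vertices each adjacent to
both the old root and the new path vertex. -/
def RootedGraph.extend (F : RootedGraph) (k : ℕ) : RootedGraph where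
  V := F.V ⊕ Option (Fin k)
  G :=
    { Adj := fun a b =>
        match a, b with
        | Sum.inl u, Sum.inl w => F.G.Adj u w
        | Sum.inl u, Sum.inr _ => u = F.root
        | Sum.inr _, Sum.inl w => w = F.root
        | Sum.inr x, Sum.inr y => x ≠ y
      symm := by
        constructor
        rintro (u | x) (w | y) h
        · exact F.G.adj_symm h
        · exact h
        · exact h
        · exact h.symm
      loopless := by
        constructor
        rintro (u | x) h
        · exact F.G.loopless.irrefl u h
        · exact h rfl }
  root := Sum.inr none

/-- The rowing graph `(F, a)`. -/
def RootedGraph.rowing (F : RootedGraph) (a : List ℕ) : RootedGraph :=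
  a.foldl RootedGraph.extend F

open scoped Classical in
/-- Adjacency matrix of (the graph of) a rooted graph. -/
noncomputable def RootedGraph.adjMat (F : RootedGraph) : Matrix F.V F.V ℝ :=
  Matrix.of fun u v => if F.G.Adj u v then 1 else 0

/-- The smallest adjacency eigenvalue of a rooted graph. -/
noncomputable def RootedGraph.lam1 (F : RootedGraph) : ℝ :=
  sInf {t : ℝ | ∃ x : F.V → ℝ, x ≠ 0 ∧ F.adjMat.mulVec x = t • x}

/-- `F₁`: the path on 4 vertices `u₁u₂u₃u₄` rooted at `u₃`. -/
def F1 : RootedGraph := { V := Fin 4, G := SimpleGraph.pathGraph 4, root := 2 }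

/-- `F₂`: the fan consisting of a path `p₁p₂p₃p₄` (vertices `0,1,2,3`) together with an
apex `r` (vertex `4`) adjacent to `p₁, p₂, p₃, p₄`, rooted at the apex `r`. -/
def F2 : RootedGraph :=
  { V := Fin 5,
    G := SimpleGraph.fromRel fun i j => (i.val + 1 = j.val ∧ j.val ≤ 3) ∨ i.val = 4,
    root := 4 }

/-- `F₃`: the path on 6 vertices `w₁w₂w₃w₄w₅w₆` rooted at `w₅`. -/
def F3 : RootedGraph := { V := Fin 6, G := SimpleGraph.pathGraph 6, root := 4 }

section
variable {V : Type} [Fintype V]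

/-- Quadratic form x^T A x + mu |x|^2 of a rooted graph. -/
noncomputable def RootedGraph.Qf (F : RootedGraph) (μ : ℝ) (x : F.V → ℝ) : ℝ :=
  dotProduct x (F.adjMat.mulVec x) + μ * dotProduct x x

lemma adjMat_isHermitian (F : RootedGraph) : F.adjMat.IsHermitian := by
  ext u v
  simp only [RootedGraph.adjMat, Matrix.conjTranspose_apply, Matrix.of_apply]
  by_cases h : F.G.Adj v u
  · simp [h, h.symm]
  · have h' : ¬ F.G.Adj u v := fun hh => h hh.symm
    simp [h, h']

/-- If the (shifted) quadratic form is somewhere negative, there is an eigenvalue below c. -/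
lemma exists_eig_lt {V : Type} [Fintype V] [DecidableEq V] (A : Matrix V V ℝ)
    (hA : A.IsHermitian) (c : ℝ) (z : V → ℝ)
    (h : dotProduct z (A.mulVec z) < c * dotProduct z z) :
    ∃ t : ℝ, (∃ x : V → ℝ, x ≠ 0 ∧ A.mulVec x = t • x) ∧ t < c := by
  by_contra hcon
  push_neg at hcon
  set B : Matrix V V ℝ := A - c • (1 : Matrix V V ℝ) with hB
  have hBH : B.IsHermitian := by
    refine Matrix.IsHermitian.sub hA ?_
    ext u v
    simp [Matrix.one_apply, Matrix.conjTranspose_apply]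
    split_ifs with h1 h2 h3 <;> simp_all
  have hev : ∀ i : V, 0 ≤ hBH.eigenvalues i := by
    intro i
    have hx := hBH.mulVec_eigenvectorBasis i
    set x : V → ℝ := ⇑(hBH.eigenvectorBasis i) with hxdef
    have hxne : x ≠ 0 := by
      have := hBH.eigenvectorBasis.orthonormal.ne_zero i
      intro hc
      apply this
      ext j
      exact congrFun hc j
    have hAx : A.mulVec x = (hBH.eigenvalues i + c) • x := by
      have h1 : B.mulVec x = A.mulVec x - c • x := by
        rw [hB, Matrix.sub_mulVec, Matrix.smul_mulVec, Matrix.one_mulVec]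
      have h2 : B.mulVec x = hBH.eigenvalues i • x := hx
      rw [h1] at h2
      have : A.mulVec x = hBH.eigenvalues i • x + c • x := by
        rw [← h2]; abel
      rw [this, add_smul]
    have := hcon (hBH.eigenvalues i + c) ⟨x, hxne, hAx⟩
    linarith
  have hpsd : B.PosSemidef := hBH.posSemidef_iff_eigenvalues_nonneg.mpr hev
  have h0 : (0:ℝ) ≤ dotProduct z (B.mulVec z) := by
    have := hpsd.re_dotProduct_nonneg z
    simpa using this
  have : dotProduct z (B.mulVec z)
      = dotProduct z (A.mulVec z) - c * dotProduct z z := by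
    rw [hB, Matrix.sub_mulVec, Matrix.smul_mulVec, Matrix.one_mulVec]
    simp [dotProduct_sub, dotProduct_smul, smul_eq_mul]
  linarith

end
/-- Eigenvalues of a 0/1 matrix are bounded by the dimension. -/
lemma eig_lb (F : RootedGraph) {t : ℝ} {x : F.V → ℝ} (hx : x ≠ 0)
    (he : F.adjMat.mulVec x = t • x) : -(Fintype.card F.V : ℝ) ≤ t := by
  classical
  obtain ⟨u0, hu0⟩ : ∃ u, x u ≠ 0 := by
    by_contra hc; push_neg at hc; exact hx (funext fun v => hc v)
  obtain ⟨v, -, hv⟩ := Finset.exists_max_image Finset.univ (fun u => |x u|) ⟨u0, Finset.mem_univ u0⟩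
  have hvpos : 0 < |x v| := lt_of_lt_of_le (abs_pos.mpr hu0) (hv u0 (Finset.mem_univ u0))
  have hkey : |t| * |x v| ≤ (Fintype.card F.V : ℝ) * |x v| := by
    have h1 : |t * x v| = |(F.adjMat.mulVec x) v| := by rw [he]; simp [abs_mul]
    have h2 : |(F.adjMat.mulVec x) v| ≤ ∑ u : F.V, |x u| := by
      rw [Matrix.mulVec, dotProduct]
      refine (Finset.abs_sum_le_sum_abs _ _).trans ?_
      refine Finset.sum_le_sum fun u _ => ?_
      rw [abs_mul]
      have : |F.adjMat v u| ≤ 1 := by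
        simp only [RootedGraph.adjMat, Matrix.of_apply]
        split_ifs <;> simp
      calc |F.adjMat v u| * |x u| ≤ 1 * |x u| :=
            mul_le_mul_of_nonneg_right this (abs_nonneg _)
        _ = |x u| := one_mul _
    have h3 : ∑ u : F.V, |x u| ≤ ∑ _u : F.V, |x v| :=
      Finset.sum_le_sum fun u _ => hv u (Finset.mem_univ u)
    have h4 : ∑ _u : F.V, |x v| = (Fintype.card F.V : ℝ) * |x v| := by
      rw [Finset.sum_const, nsmul_eq_mul, Finset.card_univ]
    calc |t| * |x v| = |t * x v| := (abs_mul t (x v)).symm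
      _ = |(F.adjMat.mulVec x) v| := h1
      _ ≤ ∑ u : F.V, |x u| := h2
      _ ≤ (Fintype.card F.V : ℝ) * |x v| := h3.trans_eq h4
  have habs : |t| ≤ (Fintype.card F.V : ℝ) := le_of_mul_le_mul_right hkey hvpos
  have := neg_abs_le t
  linarith [(abs_le.mp habs).1]

lemma lam1_bddBelow (F : RootedGraph) :
    BddBelow {t : ℝ | ∃ x : F.V → ℝ, x ≠ 0 ∧ F.adjMat.mulVec x = t • x} := by
  refine ⟨-(Fintype.card F.V : ℝ), fun t ht => ?_⟩
  obtain ⟨x, hx, he⟩ := ht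
  exact eig_lb F hx he

lemma lam1_lt (F : RootedGraph) (c : ℝ) (z : F.V → ℝ)
    (h : dotProduct z (F.adjMat.mulVec z) < c * dotProduct z z) :
    F.lam1 < c := by
  classical
  obtain ⟨t, ⟨x, hx, he⟩, htc⟩ := exists_eig_lt F.adjMat (adjMat_isHermitian F) c z h
  have : F.lam1 ≤ t := csInf_le (lam1_bddBelow F) ⟨x, hx, he⟩
  linarith

lemma lam1_ge_of_qf (F : RootedGraph) (μ : ℝ) (hμ : 0 ≤ μ)
    (h : ∀ x : F.V → ℝ, 0 ≤ dotProduct x (F.adjMat.mulVec x) + μ * dotProduct x x) :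
    -μ ≤ F.lam1 := by
  rw [RootedGraph.lam1]
  rcases Set.eq_empty_or_nonempty {t : ℝ | ∃ x : F.V → ℝ, x ≠ 0 ∧ F.adjMat.mulVec x = t • x}
    with hS | hS
  · rw [hS, Real.sInf_empty]; linarith
  · refine le_csInf hS fun t ht => ?_
    obtain ⟨x, hx, he⟩ := ht
    have hxx : 0 < dotProduct x x := by
      obtain ⟨u0, hu0⟩ : ∃ u, x u ≠ 0 := by
        by_contra hc; push_neg at hc; exact hx (funext fun v => hc v)
      have : (0:ℝ) < ∑ u, x u * x u := by
        refine Finset.sum_pos' (fun u _ => mul_self_nonneg _) ⟨u0, Finset.mem_univ u0, ?_⟩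
        exact mul_self_pos.mpr hu0
      simpa [dotProduct] using this
    have hq := h x
    have : dotProduct x (F.adjMat.mulVec x) = t * dotProduct x x := by
      rw [he]; simp [dotProduct_smul, smul_eq_mul]
    rw [this] at hq
    nlinarith
lemma Qf_extend0 (F : RootedGraph) (μ : ℝ) (x : (F.extend 0).V → ℝ) :
    (F.extend 0).Qf μ x = F.Qf μ (x ∘ Sum.inl)
      + 2 * x (Sum.inl F.root) * x (Sum.inr none) + μ * x (Sum.inr none) ^ 2 := by
  classical
  have hempty : ∀ (f : Fin 0 → ℝ), ∑ i : Fin 0, f i = 0 := fun f => by simp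
  unfold RootedGraph.extend
  simp only [RootedGraph.Qf, RootedGraph.adjMat, RootedGraph.extend, Matrix.mulVec,
    dotProduct, Matrix.of_apply, Fintype.sum_sum_type, Fintype.sum_option,
    Finset.univ_eq_empty, Finset.sum_empty, Function.comp]
  simp only [ne_eq, not_true_eq_false, if_false, zero_mul, add_zero, ite_mul, one_mul, mul_ite, mul_zero,
    Finset.sum_ite_eq, Finset.sum_ite_eq', Finset.mem_univ, if_true, mul_add, Finset.sum_add_distrib]
  ring
lemma Qf_extend1 (F : RootedGraph) (μ : ℝ) (x : (F.extend 1).V → ℝ) :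
    (F.extend 1).Qf μ x = F.Qf μ (x ∘ Sum.inl)
      + 2 * x (Sum.inl F.root) * x (Sum.inr none)
      + 2 * x (Sum.inl F.root) * x (Sum.inr (some 0))
      + 2 * x (Sum.inr none) * x (Sum.inr (some 0))
      + μ * x (Sum.inr none) ^ 2 + μ * x (Sum.inr (some 0)) ^ 2 := by
  classical
  unfold RootedGraph.extend
  simp only [RootedGraph.Qf, RootedGraph.adjMat, RootedGraph.extend, Matrix.mulVec,
    dotProduct, Matrix.of_apply, Fintype.sum_sum_type, Fintype.sum_option,
    Fin.sum_univ_one, Function.comp]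
  simp only [ne_eq, not_true_eq_false, if_false, reduceCtorEq, not_false_eq_true, if_true,
    zero_mul, add_zero, ite_mul, one_mul, mul_ite, mul_zero,
    Finset.sum_ite_eq, Finset.sum_ite_eq', Finset.mem_univ, if_true, mul_add,
    Finset.sum_add_distrib]
  ring
/-- Certificate: quadratic form at shift `μ = s + 1/s` dominates `(1/s) x_root²`. -/
def Cert (s μ : ℝ) (F : RootedGraph) : Prop :=
  ∀ x : F.V → ℝ, (1/s) * (x F.root)^2 ≤ F.Qf μ x

lemma Cert.extend0 {s μ : ℝ} (hs : 0 < s) (hμ : μ = s + 1/s) {F : RootedGraph}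
    (h : Cert s μ F) : Cert s μ (F.extend 0) := by
  intro x
  rw [Qf_extend0]
  have h1 := h (x ∘ Sum.inl)
  have hroot : (F.extend 0).root = Sum.inr none := rfl
  rw [hroot]
  set r := x (Sum.inl F.root)
  set t := x (Sum.inr (none : Option (Fin 0)))
  have key : (1/s) * r^2 + 2 * r * t + μ * t^2 - (1/s) * t^2 = (1/s) * (r + s*t)^2 := by
    field_simp
    rw [hμ]; field_simp; ring
  have h2 : (x ∘ Sum.inl) F.root = r := rfl
  rw [h2] at h1
  linarith [key, h1, mul_nonneg (le_of_lt (by positivity : (0:ℝ) < 1/s)) (sq_nonneg (r + s*t))]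

lemma Cert.rowing0 {s μ : ℝ} (hs : 0 < s) (hμ : μ = s + 1/s) :
    ∀ (n : ℕ) (F : RootedGraph), Cert s μ F → Cert s μ (F.rowing (List.replicate n 0))
  | 0, F, h => h
  | (n+1), F, h => by
      have : F.rowing (List.replicate (n+1) 0) = (F.extend 0).rowing (List.replicate n 0) := rfl
      rw [this]
      exact Cert.rowing0 hs hμ n (F.extend 0) (h.extend0 hs hμ)

lemma Cert.lam1_ge {s μ : ℝ} (hs : 0 < s) (hμ : 0 ≤ μ) {F : RootedGraph}
    (h : Cert s μ F) : -μ ≤ F.lam1 := by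
  refine lam1_ge_of_qf F μ hμ fun x => ?_
  have := h x
  have h2 : (0:ℝ) ≤ (1/s) * (x F.root)^2 := by positivity
  rw [RootedGraph.Qf] at this
  linarith
lemma Qf_F1 (μ : ℝ) (x : Fin 4 → ℝ) :
    F1.Qf μ x = 2*(x 0*x 1 + x 1*x 2 + x 2*x 3) + μ*(x 0^2 + x 1^2 + x 2^2 + x 3^2) := by
  unfold F1
  simp only [RootedGraph.Qf, RootedGraph.adjMat, F1, Matrix.mulVec, dotProduct,
    Matrix.of_apply, Fin.sum_univ_four, SimpleGraph.pathGraph_adj]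
  have h3 : ((3 : Fin 4) : ℕ) = 3 := rfl
  norm_num [h3]
  ring

lemma cert_F1_aux {t : ℝ} (ht : 1 < t) (ht6 : t^6 = t^2 + 1) (x : Fin 4 → ℝ) :
    (1/t) * (x 2)^2 ≤ F1.Qf (t + 1/t) x := by
  have ht0 : (0:ℝ) < t := lt_trans one_pos ht
  rw [Qf_F1]
  set a := x 0; set b := x 1; set c := x 2; set d := x 3
  have key : (t^2+1)*(t^4+t^2+1)*(2*t*(a*b+b*c+c*d) + (t^2+1)*(a^2+b^2+c^2+d^2) - c^2)
      = (t^4+t^2+1)*((t^2+1)*a + t*b)^2 + ((t^4+t^2+1)*b + t*(t^2+1)*c)^2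
        + (t^4+t^2+1)*(t*c + (t^2+1)*d)^2 := by
    linear_combination (t^2*c^2) * ht6
  have hpos : (0:ℝ) < (t^2+1)*(t^4+t^2+1) := by positivity
  have h1 : 0 ≤ 2*t*(a*b+b*c+c*d) + (t^2+1)*(a^2+b^2+c^2+d^2) - c^2 := by
    nlinarith [sq_nonneg ((t^2+1)*a + t*b), sq_nonneg ((t^4+t^2+1)*b + t*(t^2+1)*c),
      sq_nonneg (t*c + (t^2+1)*d), key, hpos, sq_nonneg t, sq_nonneg (t^2)]
  have h2 : 2*(a*b+b*c+c*d) + (t+1/t)*(a^2+b^2+c^2+d^2) - (1/t)*c^2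
      = (1/t) * (2*t*(a*b+b*c+c*d) + (t^2+1)*(a^2+b^2+c^2+d^2) - c^2) := by
    field_simp
  have h3 : (0:ℝ) < 1/t := by positivity
  nlinarith [mul_nonneg (le_of_lt h3) h1, h2]

lemma cert_F1 {t : ℝ} (ht : 1 < t) (ht6 : t^6 = t^2 + 1) : Cert t (t + 1/t) F1 :=
  fun x => cert_F1_aux ht ht6 x
lemma Qf_F2 (μ : ℝ) (x : Fin 5 → ℝ) :
    F2.Qf μ x = 2*(x 0*x 1 + x 1*x 2 + x 2*x 3 + x 4*x 0 + x 4*x 1 + x 4*x 2 + x 4*x 3)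
      + μ*(x 0^2 + x 1^2 + x 2^2 + x 3^2 + x 4^2) := by
  unfold F2
  simp only [RootedGraph.Qf, RootedGraph.adjMat, F2, Matrix.mulVec, dotProduct,
    Matrix.of_apply, Fin.sum_univ_five, SimpleGraph.fromRel_adj]
  have h3 : ((3 : Fin 5) : ℕ) = 3 := rfl
  have h4 : ((4 : Fin 5) : ℕ) = 4 := rfl
  norm_num [h3, h4, Fin.ext_iff]
  ring

lemma Qf_F3 (μ : ℝ) (x : Fin 6 → ℝ) :
    F3.Qf μ x = 2*(x 0*x 1 + x 1*x 2 + x 2*x 3 + x 3*x 4 + x 4*x 5)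
      + μ*(x 0^2 + x 1^2 + x 2^2 + x 3^2 + x 4^2 + x 5^2) := by
  unfold F3
  simp only [RootedGraph.Qf, RootedGraph.adjMat, F3, Matrix.mulVec, dotProduct,
    Matrix.of_apply, Fin.sum_univ_six, SimpleGraph.pathGraph_adj]
  have h3 : ((3 : Fin 6) : ℕ) = 3 := rfl
  have h4 : ((4 : Fin 6) : ℕ) = 4 := rfl
  have h5 : ((5 : Fin 6) : ℕ) = 5 := rfl
  norm_num [h3, h4, h5]
  ring

lemma cert_F2_aux (x : Fin 5 → ℝ) :
    (1/((2971:ℝ)/2500)) * (x 4)^2 ≤ F2.Qf (2971/2500 + 1/(2971/2500)) x := by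
  have key : F2.Qf (2971/2500 + 1/(2971/2500)) x - (1/((2971:ℝ)/2500)) * (x 4)^2
      = ((15076841:ℝ)/7427500) * (x 0 + (7427500/15076841) * x 1 + (7427500/15076841) * x 4)^2
      + ((172143378289281:ℝ)/111983236527500) * (x 1 + (111983236527500/172143378289281) * x 2 + (7427500/22504341) * x 4)^2
      + ((1763622854362335391321:ℝ)/1278594942243634627500) * (x 2 + (1278594942243634627500/1763622854362335391321) * x 3 + (56815480277500/116975622039281) * x 4)^2
      + ((17093097425672490887863246961:ℝ)/13099308750776246119036727500) * (x 3 + (111983236527500/284126614816781) * x 4)^2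
      + ((146588595656351:ℝ)/710316537041952500) * (x 4)^2 := by
    rw [Qf_F2]
    ring
  nlinarith [key, sq_nonneg (x 0 + (7427500/15076841) * x 1 + (7427500/15076841) * x 4),
    sq_nonneg (x 1 + (111983236527500/172143378289281) * x 2 + (7427500/22504341) * x 4),
    sq_nonneg (x 2 + (1278594942243634627500/1763622854362335391321) * x 3 + (56815480277500/116975622039281) * x 4),
    sq_nonneg (x 3 + (111983236527500/284126614816781) * x 4), sq_nonneg (x 4)]

lemma cert_F2 : Cert (2971/2500) (2971/2500 + 1/(2971/2500)) F2 :=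
  fun x => cert_F2_aux x

lemma cert_F3_aux (x : Fin 6 → ℝ) :
    (1/((31:ℝ)/25)) * (x 4)^2 ≤ F3.Qf (31/25 + 1/(31/25)) x := by
  have key : F3.Qf (31/25 + 1/(31/25)) x - (1/((31:ℝ)/25)) * (x 4)^2
      = ((1586:ℝ)/775) * (x 0 + (775/1586) * x 1)^2
      + ((1914771:ℝ)/1229150) * (x 1 + (1229150/1914771) * x 2)^2
      + ((2084235556:ℝ)/1483947525) * (x 2 + (1483947525/2084235556) * x 3)^2
      + ((2155538259941:ℝ)/1615282555900) * (x 3 + (1615282555900/2155538259941) * x 4)^2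
      + ((26439622160671:ℝ)/53888456498525) * (x 4 + (53888456498525/26439622160671) * x 5)^2
      + ((5473772918301:ℝ)/660990554016775) * (x 5)^2 := by
    rw [Qf_F3]
    ring
  nlinarith [key, sq_nonneg (x 0 + (775/1586) * x 1),
    sq_nonneg (x 1 + (1229150/1914771) * x 2),
    sq_nonneg (x 2 + (1483947525/2084235556) * x 3),
    sq_nonneg (x 3 + (1615282555900/2155538259941) * x 4),
    sq_nonneg (x 4 + (53888456498525/26439622160671) * x 5), sq_nonneg (x 5)]

lemma cert_F3 : Cert (31/25) (31/25 + 1/(31/25)) F3 :=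
  fun x => cert_F3_aux x
/-- Extend a vector along a 1-clique extension. -/
def ext1 {α : Type} (f : α → ℝ) (t w : ℝ) : (α ⊕ Option (Fin 1)) → ℝ :=
  Sum.elim f fun o => o.elim t fun _ => w

@[simp] lemma ext1_inl {α} (f : α → ℝ) (t w : ℝ) (a : α) : ext1 f t w (Sum.inl a) = f a := rfl
@[simp] lemma ext1_none {α} (f : α → ℝ) (t w : ℝ) : ext1 f t w (Sum.inr none) = t := rfl
@[simp] lemma ext1_some {α} (f : α → ℝ) (t w : ℝ) (i : Fin 1) :
    ext1 f t w (Sum.inr (some i)) = w := rfl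
@[simp] lemma ext1_comp_inl {α} (f : α → ℝ) (t w : ℝ) : (ext1 f t w) ∘ Sum.inl = f := rfl

@[simp] lemma extend_root (F : RootedGraph) (k : ℕ) : (F.extend k).root = Sum.inr none := rfl

lemma lam1_lt' (F : RootedGraph) (μ : ℝ) (z : F.V → ℝ) (h : F.Qf μ z < 0) : F.lam1 < -μ := by
  refine lam1_lt F (-μ) z ?_
  rw [RootedGraph.Qf] at h
  linarith

lemma ub1 : (F1.rowing (List.replicate 8 1)).lam1 < -(15076841/7427500 : ℝ) := by
  have hG : F1.rowing (List.replicate 8 1)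
      = ((((((((F1.extend 1).extend 1).extend 1).extend 1).extend 1).extend 1).extend 1).extend 1) := rfl
  rw [hG]
  refine lam1_lt' _ _
    (ext1 (ext1 (ext1 (ext1 (ext1 (ext1 (ext1 (ext1
      (![17939, -36415, 55980, -27577] : Fin 4 → ℝ)
      (-43487) (-6154)) 33557 4892) (-25606) (-3917)) 19164 3174)
      (-13852) (-2617)) 9356 2215) (-5411) (-1943)) 1786 1786) ?_
  erw [Qf_extend1, Qf_extend1, Qf_extend1, Qf_extend1, Qf_extend1, Qf_extend1, Qf_extend1,
    Qf_extend1]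
  simp only [ext1_comp_inl, ext1_inl, ext1_none, ext1_some, extend_root]
  erw [Qf_F1]
  have hr : F1.root = (2 : Fin 4) := rfl
  rw [hr]
  delta F1 RootedGraph.extend
  dsimp only
  simp only [ext1_comp_inl, ext1_inl, ext1_none, ext1_some]
  norm_num [Matrix.cons_val_zero, Matrix.cons_val_one, Matrix.head_cons, Matrix.cons_val_two,
    Matrix.cons_val_three, Matrix.cons_val_four, Matrix.vecHead, Matrix.vecTail, show ((5:Fin 6))=Fin.succ 4 from rfl,
    Matrix.cons_val_succ]

lemma ub2 : (F2.rowing (List.replicate 8 1)).lam1 < -(1586/775 : ℝ) := by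
  have hG : F2.rowing (List.replicate 8 1)
      = ((((((((F2.extend 1).extend 1).extend 1).extend 1).extend 1).extend 1).extend 1).extend 1) := rfl
  rw [hG]
  refine lam1_lt' _ _
    (ext1 (ext1 (ext1 (ext1 (ext1 (ext1 (ext1 (ext1
      (![24471, 12515, 12515, 24471, -62602] : Fin 5 → ℝ)
      46092 8067) (-33795) (-6008)) 24588 4498) (-17629) (-3400))
      12282 2613) (-8057) (-2064)) 4570 1704) (-1500) (-1500)) ?_
  erw [Qf_extend1, Qf_extend1, Qf_extend1, Qf_extend1, Qf_extend1, Qf_extend1, Qf_extend1,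
    Qf_extend1]
  simp only [ext1_comp_inl, ext1_inl, ext1_none, ext1_some, extend_root]
  erw [Qf_F2]
  have hr : F2.root = (4 : Fin 5) := rfl
  rw [hr]
  delta F2 RootedGraph.extend
  dsimp only
  simp only [ext1_comp_inl, ext1_inl, ext1_none, ext1_some]
  norm_num [Matrix.cons_val_zero, Matrix.cons_val_one, Matrix.head_cons, Matrix.cons_val_two,
    Matrix.cons_val_three, Matrix.cons_val_four, Matrix.vecHead, Matrix.vecTail, show ((5:Fin 6))=Fin.succ 4 from rfl,
    Matrix.cons_val_succ]

lemma ub3 : (F3.rowing (List.replicate 8 1)).lam1 < -(102909/50000 : ℝ) := by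
  have hG : F3.rowing (List.replicate 8 1)
      = ((((((((F3.extend 1).extend 1).extend 1).extend 1).extend 1).extend 1).extend 1).extend 1) := rfl
  rw [hG]
  refine lam1_lt' _ _
    (ext1 (ext1 (ext1 (ext1 (ext1 (ext1 (ext1 (ext1
      (![-8845, 18254, -28830, 41248, -56302, 27279] : Fin 6 → ℝ)
      39561 8111) (-27724) (-5735)) 19323 4070) (-13317) (-2910))
      8962 2110) (-5717) (-1572)) 3180 1229) (-1038) (-1038)) ?_
  erw [Qf_extend1, Qf_extend1, Qf_extend1, Qf_extend1, Qf_extend1, Qf_extend1, Qf_extend1,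
    Qf_extend1]
  simp only [ext1_comp_inl, ext1_inl, ext1_none, ext1_some, extend_root]
  erw [Qf_F3]
  have hr : F3.root = (4 : Fin 6) := rfl
  have h5 : (![-8845, 18254, -28830, 41248, -56302, 27279] : Fin 6 → ℝ) 5 = 27279 := rfl
  rw [hr]
  delta F3 RootedGraph.extend
  dsimp only
  simp only [ext1_comp_inl, ext1_inl, ext1_none, ext1_some]
  norm_num [h5, Matrix.cons_val_zero, Matrix.cons_val_one, Matrix.head_cons, Matrix.cons_val_two,
    Matrix.cons_val_three, Matrix.cons_val_four, Matrix.vecHead, Matrix.vecTail]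

/-- The three open intervals `(λ₁(F_i, 1⁸), λ₁(F_i, 0^∞))`, `i ∈ {1,2,3}`, cover the
interval `(-λ', -λ*)`, where `λ' = √(2 + √5)`, `λ* = √ρ + 1/√ρ`, and `ρ` is the unique
real root of `x³ = x + 1`. -/
theorem intervals_cover (ρ : ℝ) (hρ : ρ ^ 3 = ρ + 1)
    (lamStar : ℝ) (hlamStar : lamStar = Real.sqrt ρ + (Real.sqrt ρ)⁻¹)
    (L1 L2 L3 : ℝ)
    (hL1 : Filter.Tendsto (fun n : ℕ => (F1.rowing (List.replicate n 0)).lam1)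
      Filter.atTop (nhds L1))
    (hL2 : Filter.Tendsto (fun n : ℕ => (F2.rowing (List.replicate n 0)).lam1)
      Filter.atTop (nhds L2))
    (hL3 : Filter.Tendsto (fun n : ℕ => (F3.rowing (List.replicate n 0)).lam1)
      Filter.atTop (nhds L3)) :
    ∀ x ∈ Set.Ioo (-Real.sqrt (2 + Real.sqrt 5)) (-lamStar),
      x ∈ Set.Ioo (F1.rowing (List.replicate 8 1)).lam1 L1 ∨
      x ∈ Set.Ioo (F2.rowing (List.replicate 8 1)).lam1 L2 ∨
      x ∈ Set.Ioo (F3.rowing (List.replicate 8 1)).lam1 L3 := by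
  -- facts about ρ and lamStar
  have hρ1 : (1:ℝ) < ρ := by nlinarith [sq_nonneg ρ, sq_nonneg (ρ-1), sq_nonneg (ρ+1)]
  have hρ0 : (0:ℝ) ≤ ρ := by linarith
  set t := Real.sqrt ρ with htdef
  have ht2 : t ^ 2 = ρ := Real.sq_sqrt hρ0
  have ht1 : 1 < t := by
    rw [htdef]
    rw [show (1:ℝ) = Real.sqrt 1 by simp]
    exact Real.sqrt_lt_sqrt (by norm_num) hρ1
  have ht0 : 0 < t := lt_trans one_pos ht1
  have ht6 : t ^ 6 = t ^ 2 + 1 := by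
    have : t ^ 6 = (t ^ 2) ^ 3 := by ring
    rw [this, ht2, hρ, ← ht2]
  have hlamStar' : lamStar = t + 1 / t := by rw [hlamStar, one_div]
  -- lower bounds on the limits
  have hL1' : -lamStar ≤ L1 := by
    refine ge_of_tendsto' hL1 fun n => ?_
    have hc := Cert.rowing0 ht0 rfl n F1 (cert_F1 ht1 ht6)
    have := hc.lam1_ge ht0 (by positivity)
    rw [hlamStar']
    exact this
  have hL2' : -(15076841/7427500 : ℝ) ≤ L2 := by
    refine ge_of_tendsto' hL2 fun n => ?_
    have hs : (0:ℝ) < 2971/2500 := by norm_num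
    have hc := Cert.rowing0 hs rfl n F2 cert_F2
    have := hc.lam1_ge hs (by norm_num)
    have e : (15076841/7427500 : ℝ) = 2971/2500 + 1/(2971/2500) := by norm_num
    rw [e]; exact this
  have hL3' : -(1586/775 : ℝ) ≤ L3 := by
    refine ge_of_tendsto' hL3 fun n => ?_
    have hs : (0:ℝ) < 31/25 := by norm_num
    have hc := Cert.rowing0 hs rfl n F3 cert_F3
    have := hc.lam1_ge hs (by norm_num)
    have e : (1586/775 : ℝ) = 31/25 + 1/(31/25) := by norm_num
    rw [e]; exact this
  -- upper bounds rephrased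
  have hub2' : (F2.rowing (List.replicate 8 1)).lam1 < -(1586/775 : ℝ) := ub2
  have hub3' : (F3.rowing (List.replicate 8 1)).lam1 < -Real.sqrt (2 + Real.sqrt 5) := by
    refine lt_of_lt_of_le ub3 ?_
    have h5 : Real.sqrt 5 ≤ 2.2360680 := by
      rw [Real.sqrt_le_iff]; constructor <;> norm_num
    have : Real.sqrt (2 + Real.sqrt 5) ≤ 102909/50000 := by
      rw [Real.sqrt_le_iff]; constructor
      · norm_num
      · nlinarith
    linarith
  intro x hx
  obtain ⟨hx1, hx2⟩ := hx
  rcases lt_or_ge x (-(1586/775 : ℝ)) with h3 | h3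
  · right; right
    exact ⟨lt_trans hub3' hx1, lt_of_lt_of_le h3 hL3'⟩
  · rcases lt_or_ge x (-(15076841/7427500 : ℝ)) with h2 | h2
    · right; left
      exact ⟨lt_of_lt_of_le hub2' h3, lt_of_lt_of_le h2 hL2'⟩
    · left
      exact ⟨lt_of_lt_of_le ub1 h2, lt_of_lt_of_le hx2 hL1'⟩
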